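/- For all real z > 0 and real w, (1/√π) ∫_ℝ exp(-t²) T(t·z, w) dt = (z/(4√(2π))) ∫_ℝ exp(-t²z²/2) erf(t) erf(t·z·w/√2) dt, where T is Owen's T function. -/

import Mathlib

open Real MeasureTheory Filter Topology Set

noncomputable def erf (x : ℝ) : ℝ := 2 / Real.sqrt π * ∫ s in (0:ℝ)..x, Real.exp (-s^2)

noncomputable def owenT (h k : ℝ) : ℝ :=
  (1 / (2 * π)) * ∫ s in (0:ℝ)..k, (1 / (1 + s^2)) * Real.exp (-h^2 * (1 + s^2) / 2)

lemma continuous_gauss : Continuous fun s : ℝ => Real.exp (-s^2) := by fun_prop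

lemma integrable_gauss : Integrable fun s : ℝ => Real.exp (-s^2) := by
  simpa using integrable_exp_neg_mul_sq (one_pos)

lemma integral_gauss : (∫ s : ℝ, Real.exp (-s^2)) = Real.sqrt π := by
  have := integral_gaussian 1
  simpa using this

lemma hasDerivAt_erf (x : ℝ) :
    HasDerivAt erf (2 / Real.sqrt π * Real.exp (-x^2)) x := by
  have h := intervalIntegral.integral_hasDerivAt_right
    (continuous_gauss.intervalIntegrable 0 x)
    (continuous_gauss.stronglyMeasurableAtFilter _ _)
    continuous_gauss.continuousAt
  exact h.const_mul (2 / Real.sqrt π)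

lemma continuous_erf : Continuous erf :=
  Differentiable.continuous (fun x => (hasDerivAt_erf x).differentiableAt)

lemma gauss_interval_le {a b : ℝ} (hab : a ≤ b) :
    (∫ s in a..b, Real.exp (-s^2)) ≤ Real.sqrt π := by
  rw [intervalIntegral.integral_of_le hab, ← integral_gauss]
  exact setIntegral_le_integral integrable_gauss
    (Eventually.of_forall fun s => (Real.exp_pos _).le)

lemma abs_erf_le (x : ℝ) : |erf x| ≤ 2 := by
  have hπ : (0:ℝ) < Real.sqrt π := Real.sqrt_pos.2 Real.pi_pos
  have key : |∫ s in (0:ℝ)..x, Real.exp (-s^2)| ≤ Real.sqrt π := by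
    rcases le_total 0 x with hx | hx
    · rw [abs_of_nonneg (intervalIntegral.integral_nonneg hx
        fun s _ => (Real.exp_pos _).le)]
      exact gauss_interval_le hx
    · rw [intervalIntegral.integral_symm, abs_neg,
        abs_of_nonneg (intervalIntegral.integral_nonneg hx
        fun s _ => (Real.exp_pos _).le)]
      exact gauss_interval_le hx
  have : |erf x| = 2 / Real.sqrt π * |∫ s in (0:ℝ)..x, Real.exp (-s^2)| := by
    rw [erf, abs_mul, abs_of_nonneg (by positivity : (0:ℝ) ≤ 2 / Real.sqrt π)]
  rw [this]
  calc 2 / Real.sqrt π * |∫ s in (0:ℝ)..x, Real.exp (-s^2)|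
      ≤ 2 / Real.sqrt π * Real.sqrt π := by
        exact mul_le_mul_of_nonneg_left key (by positivity)
    _ = 2 := by field_simp

lemma erf_neg (x : ℝ) : erf (-x) = - erf x := by
  have h := intervalIntegral.integral_comp_neg (a := (0:ℝ)) (b := x)
    (fun s => Real.exp (-s^2))
  simp only [neg_zero] at h
  have h2 : (∫ s in (0:ℝ)..x, Real.exp (-(-s)^2)) = ∫ s in (0:ℝ)..x, Real.exp (-s^2) := by
    apply intervalIntegral.integral_congr
    intro s _
    simp [neg_sq]
  have h3 : (∫ s in (0:ℝ)..(-x), Real.exp (-s^2))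
      = -∫ s in (-x)..(0:ℝ), Real.exp (-s^2) := intervalIntegral.integral_symm _ _
  rw [erf, erf, h3, ← h, h2]
  ring

lemma integrable_mul_gauss_erf {a : ℝ} (ha : 0 < a) :
    Integrable fun t : ℝ => t * Real.exp (-a * t^2) * erf t := by
  apply Integrable.mono' (((integrable_mul_exp_neg_mul_sq ha).abs).mul_const 2)
  · exact (((continuous_id.mul (by fun_prop)).mul continuous_erf)).aestronglyMeasurable
  · refine Eventually.of_forall fun t => ?_
    rw [Real.norm_eq_abs, abs_mul]
    exact mul_le_mul_of_nonneg_left (abs_erf_le t) (abs_nonneg _)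

lemma tendsto_gauss_erf_atTop {a : ℝ} (ha : 0 < a) :
    Tendsto (fun t : ℝ => -(1/(2*a)) * (Real.exp (-a * t^2) * erf t)) atTop (𝓝 0) := by
  apply squeeze_zero_norm (a := fun t => (1/a) * Real.exp (-a * t^2))
  · intro t
    rw [Real.norm_eq_abs, abs_mul, abs_mul]
    have h1 : |(-(1/(2*a)))| = 1/(2*a) := by
      rw [abs_neg, abs_of_nonneg (by positivity)]
    have h2 : |Real.exp (-a*t^2)| = Real.exp (-a*t^2) := abs_of_pos (Real.exp_pos _)
    rw [h1, h2]
    calc 1/(2*a) * (Real.exp (-a*t^2) * |erf t|)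
        ≤ 1/(2*a) * (Real.exp (-a*t^2) * 2) := by
          apply mul_le_mul_of_nonneg_left _ (by positivity)
          exact mul_le_mul_of_nonneg_left (abs_erf_le t) (Real.exp_pos _).le
      _ = 1/a * Real.exp (-a*t^2) := by field_simp
  · have h1 : Tendsto (fun t : ℝ => a * t^2) atTop atTop :=
      (tendsto_pow_atTop two_ne_zero).const_mul_atTop ha
    have h2 : Tendsto (fun t : ℝ => Real.exp (-a * t^2)) atTop (𝓝 0) := by
      have := Real.tendsto_exp_atBot.comp (tendsto_neg_atTop_atBot.comp h1)
      simpa [Function.comp_def, neg_mul] using this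
    simpa using h2.const_mul (1/a)

lemma tendsto_gauss_erf_atBot {a : ℝ} (ha : 0 < a) :
    Tendsto (fun t : ℝ => -(1/(2*a)) * (Real.exp (-a * t^2) * erf t)) atBot (𝓝 0) := by
  apply squeeze_zero_norm (a := fun t => (1/a) * Real.exp (-a * t^2))
  · intro t
    rw [Real.norm_eq_abs, abs_mul, abs_mul]
    have h1 : |(-(1/(2*a)))| = 1/(2*a) := by
      rw [abs_neg, abs_of_nonneg (by positivity)]
    have h2 : |Real.exp (-a*t^2)| = Real.exp (-a*t^2) := abs_of_pos (Real.exp_pos _)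
    rw [h1, h2]
    calc 1/(2*a) * (Real.exp (-a*t^2) * |erf t|)
        ≤ 1/(2*a) * (Real.exp (-a*t^2) * 2) := by
          apply mul_le_mul_of_nonneg_left _ (by positivity)
          exact mul_le_mul_of_nonneg_left (abs_erf_le t) (Real.exp_pos _).le
      _ = 1/a * Real.exp (-a*t^2) := by field_simp
  · have h0 : Tendsto (fun t : ℝ => t^2) atBot atTop := by
      have habs : Tendsto (fun t : ℝ => |t|) atBot atTop := tendsto_abs_atBot_atTop
      have := (tendsto_pow_atTop two_ne_zero).comp habs
      simpa [Function.comp_def, sq_abs] using this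
    have h1 : Tendsto (fun t : ℝ => a * t^2) atBot atTop := h0.const_mul_atTop ha
    have h2 : Tendsto (fun t : ℝ => Real.exp (-a * t^2)) atBot (𝓝 0) := by
      have := Real.tendsto_exp_atBot.comp (tendsto_neg_atTop_atBot.comp h1)
      simpa [Function.comp_def, neg_mul] using this
    simpa using h2.const_mul (1/a)

lemma hasDerivAt_F {a : ℝ} (ha : 0 < a) (t : ℝ) :
    HasDerivAt (fun t : ℝ => -(1/(2*a)) * (Real.exp (-a * t^2) * erf t))
      (t * Real.exp (-a * t^2) * erf t
        - (1/(a * Real.sqrt π)) * Real.exp (-(a+1) * t^2)) t := by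
  have hsq : HasDerivAt (fun t : ℝ => t^2) (2*t) t := by
    simpa using hasDerivAt_pow 2 t
  have h1 : HasDerivAt (fun t : ℝ => -a * t^2) (-a * (2*t)) t := hsq.const_mul (-a)
  have h2 : HasDerivAt (fun t : ℝ => Real.exp (-a * t^2))
      (Real.exp (-a * t^2) * (-a * (2*t))) t := h1.exp
  have h3 := (h2.mul (hasDerivAt_erf t)).const_mul (-(1/(2*a)))
  refine h3.congr_deriv ?_
  have hexp : Real.exp (-(a+1) * t^2) = Real.exp (-a * t^2) * Real.exp (-t^2) := by
    rw [← Real.exp_add]; ring_nf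
  rw [hexp]
  have hπ : Real.sqrt π ≠ 0 := ne_of_gt (Real.sqrt_pos.2 Real.pi_pos)
  field_simp
  ring

lemma integral_mul_gauss_erf {a : ℝ} (ha : 0 < a) :
    (∫ t : ℝ, t * Real.exp (-a * t^2) * erf t) = 1 / (a * Real.sqrt (a+1)) := by
  set F : ℝ → ℝ := fun t => -(1/(2*a)) * (Real.exp (-a * t^2) * erf t) with hFdef
  set F' : ℝ → ℝ := fun t => t * Real.exp (-a * t^2) * erf t
    - (1/(a * Real.sqrt π)) * Real.exp (-(a+1) * t^2) with hF'def
  have hg : Integrable fun t : ℝ => t * Real.exp (-a * t^2) * erf t :=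
    integrable_mul_gauss_erf ha
  have hh : Integrable fun t : ℝ => (1/(a * Real.sqrt π)) * Real.exp (-(a+1) * t^2) :=
    (integrable_exp_neg_mul_sq (by linarith)).const_mul _
  have hF'int : Integrable F' := hg.sub hh
  have hcont : Continuous F :=
    Differentiable.continuous (fun x => (hasDerivAt_F ha x).differentiableAt)
  have hIic : (∫ t in Iic (0:ℝ), F' t) = F 0 - 0 :=
    integral_Iic_of_hasDerivAt_of_tendsto hcont.continuousWithinAt
      (fun x _ => hasDerivAt_F ha x) hF'int.integrableOn (tendsto_gauss_erf_atBot ha)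
  have hIoi : (∫ t in Ioi (0:ℝ), F' t) = 0 - F 0 :=
    integral_Ioi_of_hasDerivAt_of_tendsto hcont.continuousWithinAt
      (fun x _ => hasDerivAt_F ha x) hF'int.integrableOn (tendsto_gauss_erf_atTop ha)
  have hF'total : (∫ t : ℝ, F' t) = 0 := by
    rw [← intervalIntegral.integral_Iic_add_Ioi hF'int.integrableOn hF'int.integrableOn, hIic, hIoi]
    ring
  have hsplit : (∫ t : ℝ, t * Real.exp (-a * t^2) * erf t)
      = (∫ t : ℝ, F' t) + ∫ t : ℝ, (1/(a * Real.sqrt π)) * Real.exp (-(a+1) * t^2) := by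
    rw [← integral_add hF'int hh]
    congr 1
    funext t
    simp only [hF'def]
    ring
  have hhval : (∫ t : ℝ, (1/(a * Real.sqrt π)) * Real.exp (-(a+1) * t^2))
      = (1/(a * Real.sqrt π)) * Real.sqrt (π/(a+1)) := by
    rw [integral_const_mul, integral_gaussian]
  rw [hsplit, hF'total, hhval, zero_add,
    Real.sqrt_div (le_of_lt Real.pi_pos)]
  have hπ : Real.sqrt π ≠ 0 := ne_of_gt (Real.sqrt_pos.2 Real.pi_pos)
  have ha1 : Real.sqrt (a+1) ≠ 0 := ne_of_gt (Real.sqrt_pos.2 (by linarith))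
  field_simp

lemma prod_integrable_helper {F : ℝ × ℝ → ℝ} {g : ℝ → ℝ} (hF : Continuous F)
    (hgc : Continuous g) (hgi : Integrable g) (hb : ∀ p : ℝ × ℝ, |F p| ≤ g p.1) (w : ℝ) :
    Integrable F (volume.prod (volume.restrict (Ioc (0:ℝ) w))) := by
  haveI : IsFiniteMeasure (volume.restrict (Ioc (0:ℝ) w)) :=
    ⟨by rw [Measure.restrict_apply_univ]; exact measure_Ioc_lt_top⟩
  have hgp : Integrable (fun p : ℝ × ℝ => g p.1)
      (volume.prod (volume.restrict (Ioc (0:ℝ) w))) := by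
    rw [integrable_prod_iff (show Continuous (fun p : ℝ × ℝ => g p.1) from hgc.comp continuous_fst).aestronglyMeasurable]
    constructor
    · exact Eventually.of_forall fun t => by simp only []; exact integrable_const (g t)
    · simp only [norm_norm]
      simp only [integral_const, smul_eq_mul]
      exact (hgi.norm.const_mul _).congr (Eventually.of_forall fun t => by ring)
  refine hgp.mono' hF.aestronglyMeasurable (Eventually.of_forall fun p => ?_)
  simpa [Real.norm_eq_abs] using hb p

lemma key_lemma (z w : ℝ) (hz : 0 < z) (hw : 0 ≤ w) :
    (1 / Real.sqrt π) * ∫ t : ℝ, Real.exp (-t^2) * owenT (t * z) w =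
      (z / (4 * Real.sqrt (2*π))) *
        ∫ t : ℝ, Real.exp (-t^2 * z^2 / 2) * erf t * erf (t * z * w / Real.sqrt 2) := by
  have hπ : (0:ℝ) < π := Real.pi_pos
  have hsπ : (0:ℝ) < Real.sqrt π := Real.sqrt_pos.2 hπ
  -- abbreviations
  set μw := volume.restrict (Ioc (0:ℝ) w) with hμw
  -- LHS rewrite
  have hL1 : ∀ t : ℝ, Real.exp (-t^2) * owenT (t * z) w
      = (1/(2*π)) * ∫ s in Ioc (0:ℝ) w,
          (1/(1+s^2)) * Real.exp (-(1 + z^2*(1+s^2)/2) * t^2) := by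
    intro t
    rw [owenT, intervalIntegral.integral_of_le hw]
    calc Real.exp (-t^2) * ((1 / (2*π)) * ∫ s in Ioc (0:ℝ) w,
            (1/(1+s^2)) * Real.exp (-(t*z)^2 * (1+s^2) / 2))
        = (1/(2*π)) * ∫ s in Ioc (0:ℝ) w,
            Real.exp (-t^2) * ((1/(1+s^2)) * Real.exp (-(t*z)^2 * (1+s^2) / 2)) := by
          rw [integral_const_mul]; ring
      _ = (1/(2*π)) * ∫ s in Ioc (0:ℝ) w,
            (1/(1+s^2)) * Real.exp (-(1 + z^2*(1+s^2)/2) * t^2) := by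
          refine congrArg _ (integral_congr_ae (Eventually.of_forall fun s => ?_))
          dsimp only
          rw [show (-(1 + z^2*(1+s^2)/2) * t^2 : ℝ)
            = -t^2 + (-(t*z)^2 * (1+s^2) / 2) from by ring, Real.exp_add]
          ring
  -- integrability for LHS swap
  have hcL : Continuous (fun p : ℝ × ℝ =>
      (1/(1+p.2^2)) * Real.exp (-(1 + z^2*(1+p.2^2)/2) * p.1^2)) := by
    apply Continuous.mul
    · apply continuous_const.div (by fun_prop)
      intro p; positivity
    · fun_prop
  have hintL : Integrable (fun p : ℝ × ℝ =>
      (1/(1+p.2^2)) * Real.exp (-(1 + z^2*(1+p.2^2)/2) * p.1^2))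
      (volume.prod μw) := by
    apply prod_integrable_helper hcL continuous_gauss integrable_gauss
    intro p
    have h1 : (0:ℝ) < 1 + p.2^2 := by positivity
    rw [abs_of_nonneg (by positivity)]
    calc (1/(1+p.2^2)) * Real.exp (-(1 + z^2*(1+p.2^2)/2) * p.1^2)
        ≤ 1 * Real.exp (-p.1^2) := by
          apply mul_le_mul
          · rw [div_le_one h1]; nlinarith [sq_nonneg p.2]
          · apply Real.exp_le_exp.2; nlinarith [sq_nonneg p.1, sq_nonneg p.2, sq_nonneg (p.1*z)]
          · positivity
          · norm_num
      _ = Real.exp (-p.1^2) := one_mul _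
  have hLHS : (∫ t : ℝ, Real.exp (-t^2) * owenT (t * z) w)
      = (1/(2*π)) * ∫ s in Ioc (0:ℝ) w,
          (1/(1+s^2)) * Real.sqrt (π / (1 + z^2*(1+s^2)/2)) := by
    calc (∫ t : ℝ, Real.exp (-t^2) * owenT (t * z) w)
        = ∫ t : ℝ, (1/(2*π)) * ∫ s in Ioc (0:ℝ) w,
            (1/(1+s^2)) * Real.exp (-(1 + z^2*(1+s^2)/2) * t^2) := by
          congr 1; funext t; exact hL1 t
      _ = (1/(2*π)) * ∫ t : ℝ, ∫ s in Ioc (0:ℝ) w,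
            (1/(1+s^2)) * Real.exp (-(1 + z^2*(1+s^2)/2) * t^2) := integral_const_mul _ _
      _ = (1/(2*π)) * ∫ s in Ioc (0:ℝ) w, ∫ t : ℝ,
            (1/(1+s^2)) * Real.exp (-(1 + z^2*(1+s^2)/2) * t^2) := by
          rw [integral_integral_swap hintL]
      _ = (1/(2*π)) * ∫ s in Ioc (0:ℝ) w,
            (1/(1+s^2)) * Real.sqrt (π / (1 + z^2*(1+s^2)/2)) := by
          refine congrArg _ (integral_congr_ae (Eventually.of_forall fun s => ?_))
          dsimp only
          rw [integral_const_mul, integral_gaussian]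
  -- RHS pointwise rewrite
  have hs2 : (0:ℝ) < Real.sqrt 2 := Real.sqrt_pos.2 (by norm_num)
  have hsq2 : Real.sqrt 2 ^ 2 = 2 := Real.sq_sqrt (by norm_num)
  have hR1 : ∀ t : ℝ, Real.exp (-t^2*z^2/2) * erf t * erf (t*z*w/Real.sqrt 2)
      = (2/Real.sqrt π)*(z/Real.sqrt 2) * ∫ s in Ioc (0:ℝ) w,
          t * Real.exp (-(z^2*(1+s^2)/2) * t^2) * erf t := by
    intro t
    set k := t*z/Real.sqrt 2 with hk
    have h2 : (k * ∫ s in (0:ℝ)..w, Real.exp (-(k*s)^2))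
        = ∫ u in (0:ℝ)..(k*w), Real.exp (-u^2) := by
      have := intervalIntegral.smul_integral_comp_mul_left
        (f := fun u => Real.exp (-u^2)) (a := (0:ℝ)) (b := w) k
      simpa [smul_eq_mul] using this
    have h1 : erf (t*z*w/Real.sqrt 2)
        = 2/Real.sqrt π * (k * ∫ s in (0:ℝ)..w, Real.exp (-(k*s)^2)) := by
      rw [h2, erf]
      congr 2
      rw [hk]; ring
    rw [h1, intervalIntegral.integral_of_le hw]
    calc Real.exp (-t^2*z^2/2) * erf t
          * (2/Real.sqrt π * (k * ∫ s in Ioc (0:ℝ) w, Real.exp (-(k*s)^2)))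
        = (2/Real.sqrt π)*(z/Real.sqrt 2) * ((t * Real.exp (-t^2*z^2/2) * erf t)
            * ∫ s in Ioc (0:ℝ) w, Real.exp (-(k*s)^2)) := by
          rw [hk]; ring
      _ = (2/Real.sqrt π)*(z/Real.sqrt 2) * ∫ s in Ioc (0:ℝ) w,
            (t * Real.exp (-t^2*z^2/2) * erf t) * Real.exp (-(k*s)^2) := by
          rw [integral_const_mul]
      _ = (2/Real.sqrt π)*(z/Real.sqrt 2) * ∫ s in Ioc (0:ℝ) w,
            t * Real.exp (-(z^2*(1+s^2)/2) * t^2) * erf t := by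
          refine congrArg _ (integral_congr_ae (Eventually.of_forall fun s => ?_))
          dsimp only
          rw [show (-(z^2*(1+s^2)/2) * t^2 : ℝ) = (-t^2*z^2/2) + (-(k*s)^2) from by
            rw [hk, mul_pow, div_pow, hsq2]; ring, Real.exp_add]
          ring
  -- integrability for RHS swap
  have hcR : Continuous (fun p : ℝ × ℝ =>
      p.1 * Real.exp (-(z^2*(1+p.2^2)/2) * p.1^2) * erf p.1) :=
    (continuous_fst.mul (by fun_prop)).mul (continuous_erf.comp continuous_fst)
  have hgc : Continuous (fun t : ℝ => 2*(|t| * Real.exp (-(z^2/2)*t^2))) :=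
    continuous_const.mul (continuous_abs.mul (by fun_prop))
  have hgint : Integrable (fun t : ℝ => 2*(|t| * Real.exp (-(z^2/2)*t^2))) := by
    have h := ((integrable_mul_exp_neg_mul_sq
      (show (0:ℝ) < z^2/2 by positivity)).abs.const_mul 2)
    refine h.congr (Eventually.of_forall fun t => ?_)
    dsimp only
    rw [abs_mul, abs_of_pos (Real.exp_pos _)]
  have hintR : Integrable (fun p : ℝ × ℝ =>
      p.1 * Real.exp (-(z^2*(1+p.2^2)/2) * p.1^2) * erf p.1) (volume.prod μw) := by
    apply prod_integrable_helper hcR hgc hgint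
    intro p
    calc |p.1 * Real.exp (-(z^2*(1+p.2^2)/2) * p.1^2) * erf p.1|
        = |p.1| * Real.exp (-(z^2*(1+p.2^2)/2) * p.1^2) * |erf p.1| := by
          rw [abs_mul, abs_mul, abs_of_pos (Real.exp_pos _)]
      _ ≤ |p.1| * Real.exp (-(z^2/2)*p.1^2) * 2 := by
          apply mul_le_mul _ (abs_erf_le _) (abs_nonneg _) (by positivity)
          apply mul_le_mul_of_nonneg_left _ (abs_nonneg _)
          apply Real.exp_le_exp.2
          nlinarith [sq_nonneg p.1, sq_nonneg p.2, sq_nonneg (p.1*p.2*z), sq_nonneg (p.1*z)]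
      _ = 2*(|p.1| * Real.exp (-(z^2/2)*p.1^2)) := by ring
  have hRHS : (∫ t : ℝ, Real.exp (-t^2*z^2/2) * erf t * erf (t*z*w/Real.sqrt 2))
      = (2/Real.sqrt π)*(z/Real.sqrt 2) * ∫ s in Ioc (0:ℝ) w,
          1/((z^2*(1+s^2)/2) * Real.sqrt (z^2*(1+s^2)/2 + 1)) := by
    calc (∫ t : ℝ, Real.exp (-t^2*z^2/2) * erf t * erf (t*z*w/Real.sqrt 2))
        = ∫ t : ℝ, (2/Real.sqrt π)*(z/Real.sqrt 2) * ∫ s in Ioc (0:ℝ) w,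
            t * Real.exp (-(z^2*(1+s^2)/2) * t^2) * erf t := by
          congr 1; funext t; exact hR1 t
      _ = (2/Real.sqrt π)*(z/Real.sqrt 2) * ∫ t : ℝ, ∫ s in Ioc (0:ℝ) w,
            t * Real.exp (-(z^2*(1+s^2)/2) * t^2) * erf t := integral_const_mul _ _
      _ = (2/Real.sqrt π)*(z/Real.sqrt 2) * ∫ s in Ioc (0:ℝ) w, ∫ t : ℝ,
            t * Real.exp (-(z^2*(1+s^2)/2) * t^2) * erf t := by
          rw [integral_integral_swap hintR]
      _ = (2/Real.sqrt π)*(z/Real.sqrt 2) * ∫ s in Ioc (0:ℝ) w,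
            1/((z^2*(1+s^2)/2) * Real.sqrt (z^2*(1+s^2)/2 + 1)) := by
          refine congrArg _ (integral_congr_ae (Eventually.of_forall fun s => ?_))
          dsimp only
          exact integral_mul_gauss_erf (by positivity)
  rw [hLHS, hRHS, ← integral_const_mul, ← integral_const_mul, ← integral_const_mul,
    ← integral_const_mul]
  refine integral_congr_ae (Eventually.of_forall fun s => ?_)
  dsimp only
  -- pointwise algebra
  have hc : (0:ℝ) < 1 + z^2*(1+s^2)/2 := by positivity
  have ha : (0:ℝ) < z^2*(1+s^2)/2 := by positivity
  have h1 : Real.sqrt (π / (1 + z^2*(1+s^2)/2))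
      = Real.sqrt π / Real.sqrt (1 + z^2*(1+s^2)/2) := Real.sqrt_div hπ.le _
  have h2 : Real.sqrt (z^2*(1+s^2)/2 + 1) = Real.sqrt (1 + z^2*(1+s^2)/2) := by
    congr 1; ring
  have h3 : Real.sqrt (2*π) = Real.sqrt 2 * Real.sqrt π :=
    Real.sqrt_mul (by norm_num) π
  have hsc : (0:ℝ) < Real.sqrt (1 + z^2*(1+s^2)/2) := Real.sqrt_pos.2 hc
  have hs2' : Real.sqrt 2 * Real.sqrt 2 = 2 := Real.mul_self_sqrt (by norm_num)
  have hsπ' : Real.sqrt π * Real.sqrt π = π := Real.mul_self_sqrt hπ.le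
  have h1s : (0:ℝ) < 1 + s^2 := by positivity
  rw [h1, h2, h3]
  field_simp
  linear_combination (4*Real.sqrt π*Real.sqrt π) * hs2' + 8 * hsπ'

lemma owenT_neg (h k : ℝ) : owenT h (-k) = - owenT h k := by
  have e := intervalIntegral.integral_comp_neg (a := (0:ℝ)) (b := k)
    (fun s => (1/(1+s^2)) * Real.exp (-h^2*(1+s^2)/2))
  simp only [neg_zero] at e
  have h2 : (∫ s in (0:ℝ)..k, (1/(1+(-s)^2)) * Real.exp (-h^2*(1+(-s)^2)/2))
      = ∫ s in (0:ℝ)..k, (1/(1+s^2)) * Real.exp (-h^2*(1+s^2)/2) :=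
    intervalIntegral.integral_congr fun s _ => by simp [neg_sq]
  have h3 : (∫ s in (0:ℝ)..(-k), (1/(1+s^2)) * Real.exp (-h^2*(1+s^2)/2))
      = -∫ s in (-k)..(0:ℝ), (1/(1+s^2)) * Real.exp (-h^2*(1+s^2)/2) :=
    intervalIntegral.integral_symm _ _
  rw [owenT, owenT, h3, ← e, h2]
  ring

theorem owenT_integral_by_parts (z w : ℝ) (hz : 0 < z) :
    (1 / Real.sqrt π) * ∫ t : ℝ, Real.exp (-t^2) * owenT (t * z) w =
      (z / (4 * Real.sqrt (2*π))) *
        ∫ t : ℝ, Real.exp (-t^2 * z^2 / 2) * erf t * erf (t * z * w / Real.sqrt 2) := by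
  rcases le_or_gt 0 w with hw | hw
  · exact key_lemma z w hz hw
  · have hkey := key_lemma z (-w) hz (by linarith)
    have hL : (∫ t : ℝ, Real.exp (-t^2) * owenT (t * z) w)
        = -∫ t : ℝ, Real.exp (-t^2) * owenT (t * z) (-w) := by
      rw [← integral_neg]
      congr 1; funext t
      have h1 : owenT (t*z) w = -owenT (t*z) (-w) := by
        rw [← owenT_neg (t*z) (-w), neg_neg]
      rw [h1]; ring
    have hR : (∫ t : ℝ, Real.exp (-t^2 * z^2 / 2) * erf t * erf (t * z * w / Real.sqrt 2))
        = -∫ t : ℝ, Real.exp (-t^2 * z^2 / 2) * erf t * erf (t * z * (-w) / Real.sqrt 2) := by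
      rw [← integral_neg]
      congr 1; funext t
      have h1 : erf (t*z*w/Real.sqrt 2) = -erf (t*z*(-w)/Real.sqrt 2) := by
        rw [show (t*z*w/Real.sqrt 2 : ℝ) = -(t*z*(-w)/Real.sqrt 2) from by ring, erf_neg]
      rw [h1]; ring
    rw [hL, hR, mul_neg, mul_neg, hkey]
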